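/- For every n ≥ 1 there exist pairwise non-logically-equivalent EL concepts C₁, …, C_m over a signature of 2n concept names and 2 role names, all of depth at most n, with m ≥ tower(n, n) (where tower(0,k) = k and tower(k+1,n) = 2^tower(k,n)); moreover, any two EL concepts of distinct depth are not logically equivalent. -/

import Mathlib

namespace DL

/- Basic description-logic framework: concepts, interpretations, ontologies. -/

inductive Concept (Cn R : Type) : Type where
  | top  : Concept Cn R
  | bot  : Concept Cn R
  | name : Cn → Concept Cn R
  | neg  : Concept Cn R → Concept Cn R
  | conj : Concept Cn R → Concept Cn R → Concept Cn R
  | disj : Concept Cn R → Concept Cn R → Concept Cn R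
  | ex   : R → Concept Cn R → Concept Cn R
  | all  : R → Concept Cn R → Concept Cn R
  deriving DecidableEq

namespace Concept
variable {Cn R : Type}

/-- `EL` concepts: only ⊤, concept names, ⊓ and ∃r.C. -/
def isEL : Concept Cn R → Prop
  | top => True
  | bot => False
  | name _ => True
  | neg _ => False
  | conj c d => c.isEL ∧ d.isEL
  | disj _ _ => False
  | ex _ c => c.isEL
  | all _ _ => False

/-- `ELU` concepts: additionally allow ⊔. -/
def isELU : Concept Cn R → Prop
  | top => True
  | bot => False
  | name _ => True
  | neg _ => False
  | conj c d => c.isELU ∧ d.isELU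
  | disj c d => c.isELU ∧ d.isELU
  | ex _ c => c.isELU
  | all _ _ => False

/-- `EL⊥` concepts. -/
def isELbot : Concept Cn R → Prop
  | top => True
  | bot => True
  | name _ => True
  | neg _ => False
  | conj c d => c.isELbot ∧ d.isELbot
  | disj _ _ => False
  | ex _ c => c.isELbot
  | all _ _ => False

/-- `ELU⊥` concepts. -/
def isELUbot : Concept Cn R → Prop
  | top => True
  | bot => True
  | name _ => True
  | neg _ => False
  | conj c d => c.isELUbot ∧ d.isELUbot
  | disj c d => c.isELUbot ∧ d.isELUbot
  | ex _ c => c.isELUbot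
  | all _ _ => False

/-- the nesting depth of ∃/∀ restrictions. -/
def depth : Concept Cn R → ℕ
  | top => 0
  | bot => 0
  | name _ => 0
  | neg c => c.depth
  | conj c d => max c.depth d.depth
  | disj c d => max c.depth d.depth
  | ex _ c => c.depth + 1
  | all _ c => c.depth + 1

/-- size of a concept (occurrences of symbols). -/
def size : Concept Cn R → ℕ
  | top => 1
  | bot => 1
  | name _ => 1
  | neg c => c.size + 1
  | conj c d => c.size + d.size + 1
  | disj c d => c.size + d.size + 1
  | ex _ c => c.size + 2
  | all _ c => c.size + 2

/-- set of subconcepts. -/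
def sub : Concept Cn R → Set (Concept Cn R)
  | top => {top}
  | bot => {bot}
  | name A => {name A}
  | neg c => insert (neg c) c.sub
  | conj c d => insert (conj c d) (c.sub ∪ d.sub)
  | disj c d => insert (disj c d) (c.sub ∪ d.sub)
  | ex r c => insert (ex r c) c.sub
  | all r c => insert (all r c) c.sub

/-- concept names occurring in a concept. -/
def names : Concept Cn R → Set Cn
  | top => ∅
  | bot => ∅
  | name A => {A}
  | neg c => c.names
  | conj c d => c.names ∪ d.names
  | disj c d => c.names ∪ d.names
  | ex _ c => c.names
  | all _ c => c.names

/-- role names occurring in a concept. -/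
def roles : Concept Cn R → Set R
  | top => ∅
  | bot => ∅
  | name _ => ∅
  | neg c => c.roles
  | conj c d => c.roles ∪ d.roles
  | disj c d => c.roles ∪ d.roles
  | ex r c => insert r c.roles
  | all r c => insert r c.roles

/-- top-level conjuncts of a concept. -/
def tlConj : Concept Cn R → Set (Concept Cn R)
  | conj c d => c.tlConj ∪ d.tlConj
  | c => {c}

end Concept

/-- n-fold nesting of ∃r applied to a concept. -/
def exN {Cn R : Type} (r : R) : ℕ → Concept Cn R → Concept Cn R
  | 0, c => c
  | n + 1, c => Concept.ex r (exN r n c)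

/-- An interpretation: a domain together with extensions of concept and role names. -/
structure Interp (Cn R : Type) : Type 1 where
  Dom : Type
  cI : Cn → Set Dom
  rI : R → Set (Dom × Dom)

/-- Semantics of concepts. -/
def Interp.interp {Cn R : Type} (I : Interp Cn R) : Concept Cn R → Set I.Dom
  | .top => Set.univ
  | .bot => ∅
  | .name A => I.cI A
  | .neg c => (I.interp c)ᶜ
  | .conj c d => I.interp c ∩ I.interp d
  | .disj c d => I.interp c ∪ I.interp d
  | .ex r c => {x | ∃ y, (x, y) ∈ I.rI r ∧ y ∈ I.interp c}
  | .all r c => {x | ∀ y, (x, y) ∈ I.rI r → y ∈ I.interp c}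

/-- An ontology: a set of concept inclusions `C ⊑ D`, coded as pairs `(C, D)`. -/
abbrev Ontology (Cn R : Type) := Set (Concept Cn R × Concept Cn R)

/-- `I` is a model of the ontology `O`. -/
def Interp.isModel {Cn R : Type} (I : Interp Cn R) (O : Ontology Cn R) : Prop :=
  ∀ ci ∈ O, I.interp ci.1 ⊆ I.interp ci.2

/-- `O ⊨ c ⊑ d`. -/
def entails {Cn R : Type} (O : Ontology Cn R) (c d : Concept Cn R) : Prop :=
  ∀ I : Interp Cn R, I.isModel O → I.interp c ⊆ I.interp d

/-- logical equivalence (w.r.t. the empty ontology). -/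
def lequiv {Cn R : Type} (c d : Concept Cn R) : Prop :=
  entails ∅ c d ∧ entails ∅ d c

/-- set of subconcepts of an ontology. -/
def subO {Cn R : Type} (O : Ontology Cn R) : Set (Concept Cn R) :=
  {F | ∃ ci ∈ O, F ∈ ci.1.sub ∪ ci.2.sub}

/-- concept names of an ontology. -/
def sigC {Cn R : Type} (O : Ontology Cn R) : Set Cn :=
  {A | ∃ ci ∈ O, A ∈ ci.1.names ∪ ci.2.names}

/-- role names of an ontology. -/
def sigR {Cn R : Type} (O : Ontology Cn R) : Set R :=
  {r | ∃ ci ∈ O, r ∈ ci.1.roles ∪ ci.2.roles}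


/- STATEMENT 19: with 2n concept names and 2 role names there are at least tower(n,n)
   pairwise non-equivalent EL concepts of depth ≤ n; moreover EL concepts of distinct
   depth are never logically equivalent. -/

/-- tower of exponentials. -/
def tower : ℕ → ℕ → ℕ
  | 0, n => n
  | k + 1, n => 2 ^ tower k n

/- ------------------- auxiliary development ------------------- -/
section Aux

variable {Cn R ι : Type}

/-- conjunction over a list of concepts. -/
def conjList (l : List ι) (f : ι → Concept Cn R) : Concept Cn R :=
  l.foldr (fun i c => Concept.conj (f i) c) Concept.top

lemma conjList_isEL (l : List ι) (f : ι → Concept Cn R) (h : ∀ i, (f i).isEL) :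
    (conjList l f).isEL := by
  induction l with
  | nil => trivial
  | cons a t ih => exact ⟨h a, ih⟩

lemma conjList_depth_le (l : List ι) (f : ι → Concept Cn R) (k : ℕ)
    (h : ∀ i, (f i).depth ≤ k) : (conjList l f).depth ≤ k := by
  induction l with
  | nil => exact Nat.zero_le k
  | cons a t ih => exact max_le (h a) ih

lemma mem_interp_conjList (I : Interp Cn R) (l : List ι) (f : ι → Concept Cn R)
    (x : I.Dom) : x ∈ I.interp (conjList l f) ↔ ∀ i ∈ l, x ∈ I.interp (f i) := by
  induction l with
  | nil => simp [conjList, Interp.interp]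
  | cons a t ih =>
      constructor
      · rintro ⟨h1, h2⟩ i hi
        rcases List.mem_cons.1 hi with rfl | hi
        · exact h1
        · exact ih.1 h2 i hi
      · intro h
        exact ⟨h a List.mem_cons_self, ih.2 (fun i hi => h i (List.mem_cons_of_mem _ hi))⟩

end Aux

/-- A good family at level `k`: `tower (k+1) n` concepts of depth ≤ k over 2n names and
2 roles, together with pointed models separating them. -/
structure Good (n k : ℕ) where
  X : Type
  fin : Fintype X
  dec : DecidableEq X
  card : @Fintype.card X fin = tower (k+1) n
  C : X → Concept (Fin (2*n)) (Fin 2)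
  hEL : ∀ x, (C x).isEL
  hdepth : ∀ x, (C x).depth ≤ k
  I : X → Interp (Fin (2*n)) (Fin 2)
  pt : (x : X) → (I x).Dom
  hsat : ∀ x y, pt x ∈ (I x).interp (C y) ↔ x = y

/-- Base family: for each `S : Fin n → Bool` take the conjunction of the names `i`
(for `S i = true`) and `n + i` (for `S i = false`). -/
def good0 (n : ℕ) : Good n 0 where
  X := Fin n → Bool
  fin := inferInstance
  dec := inferInstance
  card := by simp [tower]
  C S := conjList (List.finRange n)
    (fun i => if S i then Concept.name ⟨i.val, by omega⟩
              else Concept.name ⟨n + i.val, by omega⟩)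
  hEL S := by
    apply conjList_isEL
    intro i
    by_cases h : S i <;> simp [h, Concept.isEL]
  hdepth S := by
    apply conjList_depth_le
    intro i
    by_cases h : S i <;> simp [h, Concept.depth]
  I S := { Dom := Unit
           cI := fun A => {_u | ∃ i : Fin n,
              (S i = true ∧ (A : ℕ) = i.val) ∨ (S i = false ∧ (A : ℕ) = n + i.val)}
           rI := fun _ => ∅ }
  pt _ := ()
  hsat S S' := by
    rw [mem_interp_conjList]
    constructor
    · intro h
      funext i
      have hi := h i (List.mem_finRange i)
      by_cases hS' : S' i
      · simp only [hS', if_pos] at hi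
        obtain ⟨j, hj⟩ := hi
        rcases hj with ⟨hj1, hj2⟩ | ⟨hj1, hj2⟩
        · simp only at hj2
          have : j = i := Fin.ext (by omega)
          subst this; rw [hj1, hS']
        · simp only at hj2; omega
      · simp only [hS', if_neg, Bool.not_eq_true] at hi ⊢
        obtain ⟨j, hj⟩ := hi
        rcases hj with ⟨hj1, hj2⟩ | ⟨hj1, hj2⟩
        · simp only at hj2; omega
        · simp only at hj2
          have : j = i := Fin.ext (by omega)
          subst this
          exact hj1
    · rintro rfl i _
      by_cases hS : S i
      · rw [if_pos hS]
        exact ⟨i, Or.inl ⟨hS, rfl⟩⟩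
      · rw [if_neg hS]
        exact ⟨i, Or.inr ⟨Bool.eq_false_iff.mpr hS, rfl⟩⟩

variable {n k : ℕ}

/-- The interpretation used at level `k+1` for index `T`: a fresh root with an
`r₀`-edge (if `T x`) or `r₁`-edge (if `¬ T x`) to the distinguished point of the
level-`k` model for `x`. -/
def stepInterp (G : Good n k) (T : G.X → Bool) : Interp (Fin (2*n)) (Fin 2) where
  Dom := Option ((x : G.X) × (G.I x).Dom)
  cI A := {d | ∃ (x : G.X) (e : (G.I x).Dom), d = some ⟨x, e⟩ ∧ e ∈ (G.I x).cI A}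
  rI ρ := {q | (∃ (x : G.X) (e e' : (G.I x).Dom),
                  q = (some ⟨x, e⟩, some ⟨x, e'⟩) ∧ (e, e') ∈ (G.I x).rI ρ) ∨
               (∃ x : G.X, q = (none, some ⟨x, G.pt x⟩) ∧ ρ = (if T x then 0 else 1))}

/-- Inside a component, the step interpretation behaves like the original model. -/
lemma stepInterp_some (G : Good n k) (T : G.X → Bool) :
    ∀ (E : Concept (Fin (2*n)) (Fin 2)) (x : G.X) (e : (G.I x).Dom),
      ((some ⟨x, e⟩ : (stepInterp G T).Dom) ∈ (stepInterp G T).interp E ↔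
        e ∈ (G.I x).interp E) := by
  intro E
  induction E with
  | top => intro x e; simp [Interp.interp]; exact Set.mem_univ _
  | bot => intro x e; simp [Interp.interp]; exact fun h => h
  | name A =>
      intro x e
      simp only [Interp.interp, stepInterp, Set.mem_setOf_eq]
      constructor
      · rintro ⟨x', e', he, hm⟩
        obtain ⟨rfl, he2⟩ := Sigma.mk.inj_iff.1 (Option.some_injective _ he)
        rwa [eq_of_heq he2]
      · intro h; exact ⟨x, e, rfl, h⟩
  | neg c ih => intro x e; exact not_congr (ih x e)
  | conj c d ihc ihd => intro x e; exact and_congr (ihc x e) (ihd x e)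
  | disj c d ihc ihd => intro x e; exact or_congr (ihc x e) (ihd x e)
  | ex r c ih =>
      intro x e
      simp only [Interp.interp, Set.mem_setOf_eq]
      constructor
      · rintro ⟨y, hy, hyc⟩
        rcases hy with ⟨x', e1, e2, hq, hr⟩ | ⟨x', hq, _⟩
        · have h1 := congrArg Prod.fst hq
          have h2 := congrArg Prod.snd hq
          simp only at h1 h2
          obtain ⟨rfl, he1⟩ := Sigma.mk.inj_iff.1 (Option.some_injective _ h1)
          subst h2
          have hee : e = e1 := eq_of_heq he1
          subst hee
          exact ⟨e2, hr, (ih x e2).1 hyc⟩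
        · exact absurd (congrArg Prod.fst hq) (by simp)
      · rintro ⟨e', hr, hc⟩
        exact ⟨some ⟨x, e'⟩, Or.inl ⟨x, e, e', rfl, hr⟩, (ih x e').2 hc⟩
  | all r c ih =>
      intro x e
      simp only [Interp.interp, Set.mem_setOf_eq]
      constructor
      · intro h e' hr
        exact (ih x e').1 (h (some ⟨x, e'⟩) (Or.inl ⟨x, e, e', rfl, hr⟩))
      · intro h y hy
        rcases hy with ⟨x', e1, e2, hq, hr⟩ | ⟨x', hq, _⟩
        · have h1 := congrArg Prod.fst hq
          have h2 := congrArg Prod.snd hq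
          simp only at h1 h2
          obtain ⟨rfl, he1⟩ := Sigma.mk.inj_iff.1 (Option.some_injective _ h1)
          subst h2
          have hee : e = e1 := eq_of_heq he1
          subst hee
          exact (ih x e2).2 (h e2 hr)
        · exact absurd (congrArg Prod.fst hq) (by simp)

/-- Level step: concepts indexed by `T : G.X → Bool`. -/
noncomputable def goodStep (G : Good n k) : Good n (k+1) where
  X := G.X → Bool
  fin := letI := G.fin; letI := G.dec; inferInstance
  dec := letI := G.fin; letI := G.dec; inferInstance
  card := by
    letI := G.fin; letI := G.dec
    have : @Fintype.card (G.X → Bool) _ = 2 ^ Fintype.card G.X := by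
      simp [Fintype.card_fun]
    rw [this, G.card]; rfl
  C T := letI := G.fin; letI := G.dec
    conjList (Finset.univ.toList : List G.X)
      (fun x => Concept.ex (if T x then 0 else 1) (G.C x))
  hEL T := by
    apply conjList_isEL
    intro x
    exact G.hEL x
  hdepth T := by
    apply conjList_depth_le
    intro x
    exact Nat.succ_le_succ (G.hdepth x)
  I T := stepInterp G T
  pt _ := none
  hsat T T' := by
    letI := G.fin; letI := G.dec
    refine (mem_interp_conjList _ _ _ _).trans ?_
    constructor
    · intro h
      funext x
      have hx := h x (by simp [Finset.mem_toList])
      simp only [Interp.interp, Set.mem_setOf_eq] at hx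
      obtain ⟨y, hy, hyc⟩ := hx
      rcases hy with ⟨x', e1, e2, hq, hr⟩ | ⟨x', hq, hrole⟩
      · exact absurd (congrArg Prod.fst hq) (by simp)
      · have h2 := congrArg Prod.snd hq
        simp only at h2
        subst h2
        have := (stepInterp_some G T (G.C x) x' (G.pt x')).1 hyc
        have hx' : x' = x := (G.hsat x' x).1 this
        subst hx'
        by_cases h1 : T x' <;> by_cases h2 : T' x' <;>
          simp_all
    · rintro rfl x _
      simp only [Interp.interp, Set.mem_setOf_eq]
      refine ⟨some ⟨x, G.pt x⟩, Or.inr ⟨x, rfl, rfl⟩, ?_⟩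
      exact (stepInterp_some G T (G.C x) x (G.pt x)).2 ((G.hsat x x).2 rfl)

/-- Good families at every level. -/
noncomputable def good (n : ℕ) : ∀ k, Good n k
  | 0 => good0 n
  | k + 1 => goodStep (good n k)

/- --------- chain models for the depth claim --------- -/

/-- A chain of length `d`: all names hold everywhere, all roles are the successor
relation. -/
def chain (Cn R : Type) (d : ℕ) : Interp Cn R where
  Dom := Fin (d+1)
  cI _ := Set.univ
  rI _ := {p | (p.1 : ℕ) + 1 = (p.2 : ℕ)}

lemma chain_interp (Cn R : Type) (d : ℕ) :
    ∀ (E : Concept Cn R), E.isEL → ∀ i : Fin (d+1),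
      (i ∈ (chain Cn R d).interp E ↔ (i : ℕ) + E.depth ≤ d) := by
  intro E
  induction E with
  | top => intro _ i; exact iff_of_true (Set.mem_univ _) (by simp only [Concept.depth]; omega)
  | bot => intro h; exact absurd h not_false
  | name A => intro _ i; exact iff_of_true (Set.mem_univ _) (by simp only [Concept.depth]; omega)
  | neg c ih => intro h; exact absurd h not_false
  | conj c d' ihc ihd =>
      rintro ⟨hc, hd⟩ i
      show i ∈ (chain Cn R d).interp c ∧ i ∈ (chain Cn R d).interp d' ↔ _
      rw [ihc hc i, ihd hd i, Concept.depth]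
      omega
  | disj c d' ihc ihd => intro h; exact absurd h not_false
  | ex r c ih =>
      intro hc i
      simp only [Interp.interp, Set.mem_setOf_eq, Concept.depth]
      constructor
      · rintro ⟨y, hy, hyc⟩
        have := (ih hc y).1 hyc
        replace hy : ((i : Fin (d+1)) : ℕ) + 1 = @Fin.val (d+1) y := hy
        omega
      · intro h
        have hi1 : (i : ℕ) + 1 < d + 1 := by omega
        refine ⟨⟨(i : ℕ) + 1, hi1⟩, ?_, ?_⟩
        · exact rfl
        · exact (ih hc ⟨(i : ℕ) + 1, hi1⟩).2 (by show (i : ℕ) + 1 + c.depth ≤ d; omega)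
  | all r c ih => intro h; exact absurd h not_false

lemma not_lequiv_of_depth_lt {Cn R : Type} {C D : Concept Cn R} (hC : C.isEL)
    (hD : D.isEL) (h : C.depth < D.depth) : ¬ lequiv C D := by
  rintro ⟨h1, _⟩
  have hm : (chain Cn R C.depth).isModel ∅ := by
    intro ci hci
    exact absurd hci (Set.notMem_empty _)
  have h0 : (⟨0, Nat.succ_pos _⟩ : Fin (C.depth + 1)) ∈ (chain Cn R C.depth).interp C := by
    rw [chain_interp Cn R C.depth C hC]
    simp
  have h2 := h1 _ hm h0
  replace h2 : 0 + D.depth ≤ C.depth := (chain_interp Cn R C.depth D hD _).1 h2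
  omega

theorem stmt19 :
    ∀ n : ℕ, 1 ≤ n →
      (∃ (m : ℕ) (Cs : Fin m → Concept (Fin (2 * n)) (Fin 2)),
        tower n n ≤ m ∧
        (∀ i, (Cs i).isEL ∧ (Cs i).depth ≤ n) ∧
        ∀ i j, i ≠ j → ¬ lequiv (Cs i) (Cs j)) ∧
      (∀ (Cn R : Type) (C D : Concept Cn R),
        C.isEL → D.isEL → C.depth ≠ D.depth → ¬ lequiv C D) := by
  intro n hn
  constructor
  · set G := good n (n-1) with hG
    letI := G.fin
    refine ⟨Fintype.card G.X, fun i => G.C ((Fintype.equivFin G.X).symm i), ?_, ?_, ?_⟩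
    · have hc : Fintype.card G.X = tower (n - 1 + 1) n := G.card
      have h1 : n - 1 + 1 = n := by omega
      rw [hc, h1]
    · intro i
      exact ⟨G.hEL _, le_trans (G.hdepth _) (by omega)⟩
    · rintro i j hij ⟨h1, h2⟩
      set x := (Fintype.equivFin G.X).symm i with hx
      set y := (Fintype.equivFin G.X).symm j with hy
      have hxy : x ≠ y := by
        intro h
        apply hij
        have := congrArg (Fintype.equivFin G.X) h
        simpa [hx, hy] using this
      have hm : (G.I x).isModel ∅ := by
        intro ci hci
        exact absurd hci (Set.notMem_empty _)
      have hmem := h1 _ hm ((G.hsat x x).2 rfl)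
      exact hxy ((G.hsat x y).1 hmem)
  · intro Cn R C D hC hD hne hl
    rcases Nat.lt_or_ge C.depth D.depth with h | h
    · exact not_lequiv_of_depth_lt hC hD h hl
    · exact not_lequiv_of_depth_lt hD hC (by omega) ⟨hl.2, hl.1⟩
end DL
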